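/- Every nonidentical involutive automorphism of the quaternion algebra ℍ is conjugation by a purely imaginary unit quaternion; that is, it has the form h ↦ u⁻¹hu for some quaternion u with u² = -1, and in a suitable orthonormal basis i, j, k of the imaginary quaternions it acts as a + bi + cj + dk ↦ a + bi - cj - dk. -/

import Mathlib

open Quaternion

lemma my_central (x : ℍ[ℝ]) (h : ∀ q : ℍ[ℝ], x * q = q * x) : x = algebraMap ℝ ℍ[ℝ] x.re := by
  have hi := h ((Quaternion.equivProd ℝ).symm (0,1,0,0))
  have hj := h ((Quaternion.equivProd ℝ).symm (0,0,1,0))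
  rw [Quaternion.ext_iff] at hi hj
  simp [Quaternion.re_mul, Quaternion.imI_mul, Quaternion.imJ_mul, Quaternion.imK_mul] at hi hj
  ext <;> simp <;> linarith [hi.1, hi.2, hj.1, hj.2]

lemma my_imsq (q : ℍ[ℝ]) (h : q.re = 0) : q * q = algebraMap ℝ ℍ[ℝ] (-(normSq q)) := by
  ext <;> simp [Quaternion.re_mul, Quaternion.imI_mul, Quaternion.imJ_mul, Quaternion.imK_mul,
    Quaternion.normSq_def', h, ← Quaternion.coe_pow] <;> ring

lemma my_anti (p w : ℍ[ℝ]) (hp : p.re = 0) (hw : w.re = 0)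
    (hd : p.imI*w.imI + p.imJ*w.imJ + p.imK*w.imK = 0) : p * w = -(w * p) := by
  ext <;> simp [Quaternion.re_mul, Quaternion.imI_mul, Quaternion.imJ_mul, Quaternion.imK_mul,
    hp, hw] <;> nlinarith [hd]

lemma my_sigma_real (σ : ℍ[ℝ] ≃+* ℍ[ℝ]) (r : ℝ) :
    σ (algebraMap ℝ ℍ[ℝ] r) = algebraMap ℝ ℍ[ℝ] r := by
  -- σ of a real is central
  have hcen : ∀ s : ℝ, σ (algebraMap ℝ ℍ[ℝ] s) = algebraMap ℝ ℍ[ℝ] ((σ (algebraMap ℝ ℍ[ℝ] s)).re) := by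
    intro s
    apply my_central
    intro q
    have : q = σ (σ.symm q) := (σ.apply_symm_apply q).symm
    rw [this, ← map_mul, ← map_mul, Algebra.commutes]
  -- the induced map ℝ → ℝ is a ring hom, hence the identity
  let f : ℝ →+* ℝ :=
  { toFun := fun s => (σ (algebraMap ℝ ℍ[ℝ] s)).re
    map_one' := by simp
    map_mul' := by
      intro a b
      show (σ (algebraMap ℝ ℍ[ℝ] (a*b))).re = _
      rw [map_mul, map_mul, hcen a, hcen b, ← map_mul (algebraMap ℝ ℍ[ℝ])]
      simp
    map_zero' := by simp
    map_add' := by intro a b; simp [map_add] }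
  have hf : f = RingHom.id ℝ := Subsingleton.elim _ _
  have : (σ (algebraMap ℝ ℍ[ℝ] r)).re = r := by
    have := congrArg (fun g => g r) hf; exact this
  rw [hcen r, this]

lemma my_neg_re (σ : ℍ[ℝ] ≃+* ℍ[ℝ]) (q : ℍ[ℝ]) (hq : σ q = -q) : q.re = 0 := by
  set v := q - algebraMap ℝ ℍ[ℝ] q.re with hv
  have hvre : v.re = 0 := by simp [hv]
  have h2 : σ v = -v - algebraMap ℝ ℍ[ℝ] (2*q.re) := by
    rw [hv, map_sub, hq, my_sigma_real, map_mul, map_ofNat, two_mul]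
    abel
  have h3 : σ (v*v) = v*v := by rw [my_imsq v hvre, my_sigma_real]
  rw [map_mul σ, h2] at h3
  have h4 := congrArg QuaternionAlgebra.re h3
  simp [Quaternion.re_mul, hvre] at h4
  nlinarith [h4]

lemma my_second (σ : ℍ[ℝ] ≃+* ℍ[ℝ]) (hinv : ∀ h : ℍ[ℝ], σ (σ h) = h)
    (j' : ℍ[ℝ]) (hj2 : j' * j' = -1) (hsj : σ j' = -j') :
    ∃ q : ℍ[ℝ], σ q = -q ∧ ∀ t : ℝ, q ≠ t • j' := by
  by_contra hH
  push_neg at hH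
  have key : ∀ y : ℍ[ℝ], ∃ s t : ℝ, y + y = algebraMap ℝ ℍ[ℝ] s + t • j' := by
    intro y
    obtain ⟨t, ht⟩ := hH (y - σ y) (by rw [map_sub, hinv]; abel)
    obtain ⟨s, hs⟩ := hH (j' * (y + σ y))
      (by rw [map_mul, map_add, hinv, hsj, neg_mul, add_comm])
    have h1 : y + σ y = algebraMap ℝ ℍ[ℝ] s := by
      have h := congrArg (fun z => -j' * z) hs
      simp only [← mul_assoc, neg_mul, hj2, neg_neg, one_mul, mul_smul_comm] at h
      rw [h, Algebra.algebraMap_eq_smul_one]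
    have : y + y = (y + σ y) + (y - σ y) := by abel
    exact ⟨s, t, by rw [this, h1, ht]⟩
  obtain ⟨s1, t1, h1⟩ := key ((Quaternion.equivProd ℝ).symm (0,1,0,0))
  obtain ⟨s2, t2, h2⟩ := key ((Quaternion.equivProd ℝ).symm (0,0,1,0))
  rw [Quaternion.ext_iff] at h1 h2
  simp at h1 h2
  obtain ⟨-, h1I, h1J, -⟩ := h1
  obtain ⟨-, -, h2J, -⟩ := h2
  have ht1 : t1 ≠ 0 := fun h => by rw [h, zero_mul] at h1I; norm_num at h1I
  have hJ0 : j'.imJ = 0 := h1J.resolve_left ht1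
  rw [hJ0, mul_zero] at h2J
  norm_num at h2J

lemma my_smul (σ : ℍ[ℝ] ≃+* ℍ[ℝ]) (r : ℝ) (x : ℍ[ℝ]) : σ (r • x) = r • σ x := by
  rw [← Quaternion.coe_mul_eq_smul, ← Quaternion.coe_mul_eq_smul, map_mul]
  congr 1
  rw [show ((r:ℝ) : ℍ[ℝ]) = algebraMap ℝ ℍ[ℝ] r from rfl, my_sigma_real]

lemma my_normSq_pos (q : ℍ[ℝ]) (hq0 : q ≠ 0) : 0 < normSq q := by
  rcases lt_or_eq_of_le (normSq_nonneg (a := q)) with h | h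
  · exact h
  · exact absurd (Quaternion.normSq_eq_zero.mp h.symm) hq0

lemma my_normalize (σ : ℍ[ℝ] ≃+* ℍ[ℝ]) (q : ℍ[ℝ]) (hq0 : q ≠ 0) (hq : σ q = -q) :
    ∃ u : ℍ[ℝ], u.re = 0 ∧ normSq u = 1 ∧ u * u = -1 ∧ σ u = -u ∧ ∃ r : ℝ, 0 < r ∧ u = r • q := by
  have hns : 0 < normSq q := my_normSq_pos q hq0
  set r : ℝ := (Real.sqrt (normSq q))⁻¹ with hr
  have hrpos : 0 < r := by positivity
  refine ⟨r • q, ?_, ?_, ?_, ?_, r, hrpos, rfl⟩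
  · rw [Quaternion.re_smul, smul_eq_mul, my_neg_re σ q hq, mul_zero]
  · rw [Quaternion.normSq_smul, hr, inv_pow, Real.sq_sqrt hns.le, inv_mul_cancel₀ hns.ne']
  · have hre : (r • q).re = 0 := by
      rw [Quaternion.re_smul, smul_eq_mul, my_neg_re σ q hq, mul_zero]
    rw [my_imsq _ hre]
    have h1 : normSq (r • q) = 1 := by
      rw [Quaternion.normSq_smul, hr, inv_pow, Real.sq_sqrt hns.le, inv_mul_cancel₀ hns.ne']
    rw [h1, map_neg, map_one]
  · rw [my_smul, hq, smul_neg]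
open Quaternion

set_option maxHeartbeats 1600000 in
theorem involutive_automorphism_form (σ : ℍ[ℝ] ≃+* ℍ[ℝ])
    (hinv : ∀ h : ℍ[ℝ], σ (σ h) = h) (hne : σ ≠ RingEquiv.refl ℍ[ℝ]) :
    ∃ i' j' k' : ℍ[ℝ],
      i' ^ 2 = -1 ∧ j' ^ 2 = -1 ∧ k' ^ 2 = -1 ∧
      i' * j' = k' ∧ j' * k' = i' ∧ k' * i' = j' ∧
      (∀ h : ℍ[ℝ], σ h = i'⁻¹ * h * i') ∧
      (∀ a b c d : ℝ,
        σ (algebraMap ℝ ℍ[ℝ] a + b • i' + c • j' + d • k') =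
          algebraMap ℝ ℍ[ℝ] a + b • i' - c • j' - d • k') := by
  classical
  -- a vector with σ h0 ≠ h0
  have hex : ∃ h0 : ℍ[ℝ], σ h0 ≠ h0 := by
    by_contra h; push_neg at h
    exact hne (RingEquiv.ext h)
  obtain ⟨h0, hh0⟩ := hex
  have hq0ne : h0 - σ h0 ≠ 0 := sub_ne_zero.mpr (Ne.symm hh0)
  have hq0 : σ (h0 - σ h0) = -(h0 - σ h0) := by rw [map_sub, hinv]; abel
  obtain ⟨j', hjre, hjns, hj2, hsj, -⟩ := my_normalize σ _ hq0ne hq0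
  -- a second anti-fixed vector, independent from j'
  obtain ⟨q, hqa, hqnp⟩ := my_second σ hinv j' hj2 hsj
  have hqre : q.re = 0 := my_neg_re σ q hqa
  set t0 : ℝ := j'.imI*q.imI + j'.imJ*q.imJ + j'.imK*q.imK with ht0
  set w : ℍ[ℝ] := q - t0 • j' with hw
  have hwne : w ≠ 0 := by
    intro h
    exact hqnp t0 (by rw [← sub_eq_zero]; exact h)
  have hwa : σ w = -w := by
    rw [hw, map_sub, hqa, my_smul, hsj, smul_neg]; abel
  have hwre : w.re = 0 := by
    simp [hw, Quaternion.re_smul, hjre, hqre]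
  have hjns' : j'.imI^2 + j'.imJ^2 + j'.imK^2 = 1 := by
    have := hjns; rw [Quaternion.normSq_def', hjre] at this; linarith [this]
  have hdot : j'.imI*w.imI + j'.imJ*w.imJ + j'.imK*w.imK = 0 := by
    simp only [hw, Quaternion.imI_sub, Quaternion.imJ_sub, Quaternion.imK_sub,
      Quaternion.imI_smul, Quaternion.imJ_smul, Quaternion.imK_smul, smul_eq_mul]
    linear_combination (-1 : ℝ) * ht0 - t0 * hjns'
  obtain ⟨k', hkre, hkns, hk2, hsk, r, hrpos, hkw⟩ := my_normalize σ w hwne hwa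
  have hanti : j' * k' = -(k' * j') := by
    apply my_anti j' k' hjre hkre
    rw [hkw]
    simp only [Quaternion.imI_smul, Quaternion.imJ_smul, Quaternion.imK_smul, smul_eq_mul]
    linear_combination r * hdot
  have hanti' : k' * j' = -(j' * k') := by rw [hanti, neg_neg]
  -- the quaternionic basis
  let B : QuaternionAlgebra.Basis ℍ[ℝ] (-1 : ℝ) (0 : ℝ) (-1 : ℝ) :=
  { i := j', j := k', k := j' * k'
    i_mul_i := by rw [hj2]; simp
    j_mul_j := by rw [hk2]; simp
    i_mul_j := rfl
    j_mul_i := by rw [hanti']; simp }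
  set i' : ℍ[ℝ] := j' * k' with hi'
  have hBi : B.i = j' := rfl
  have hBj : B.j = k' := rfl
  have hBk : B.k = i' := rfl
  -- products
  have hij : i' * j' = k' := by
    have := B.k_mul_i; rw [hBi, hBj, hBk] at this; rw [this]; simp
  have hjk : j' * k' = i' := rfl
  have hki : k' * i' = j' := by
    have := B.j_mul_k; rw [hBi, hBj, hBk] at this; rw [this]; simp
  have hi2 : i' * i' = -1 := by
    have := B.k_mul_k; rw [hBk] at this; rw [this]; simp
  have hik : i' * k' = -j' := by
    have := B.k_mul_j; rw [hBi, hBj, hBk] at this; rw [this]; simp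
  have hji : j' * i' = -k' := by
    have := B.i_mul_k; rw [hBi, hBj, hBk] at this; rw [this]; simp
  -- σ fixes i'
  have hsi : σ i' = i' := by rw [hi', map_mul, hsj, hsk, neg_mul_neg]
  -- inverse of i'
  have hi'ne : i' ≠ 0 := by
    intro h; rw [h, zero_mul] at hi2; exact one_ne_zero (neg_eq_zero.mp hi2.symm)
  have hiinv : i'⁻¹ = -i' := by
    apply inv_eq_of_mul_eq_one_right
    rw [mul_neg, hi2, neg_neg]
  have hinv1 : i'⁻¹ * i' = 1 := inv_mul_cancel₀ hi'ne
  have hinv2 : i' * i'⁻¹ = 1 := mul_inv_cancel₀ hi'ne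
  have hcan : ∀ z : ℍ[ℝ], i' * (i'⁻¹ * z) = z := fun z => by rw [← mul_assoc, hinv2, one_mul]
  -- the conjugation algebra morphism
  let ψ : ℍ[ℝ] →ₐ[ℝ] ℍ[ℝ] :=
  { toFun := fun h => i'⁻¹ * h * i'
    map_one' := by show i'⁻¹ * 1 * i' = 1; rw [mul_one, hinv1]
    map_mul' := by
      intro x y
      show i'⁻¹ * (x * y) * i' = (i'⁻¹ * x * i') * (i'⁻¹ * y * i')
      simp only [mul_assoc, hcan]
    map_zero' := by show i'⁻¹ * 0 * i' = 0; rw [mul_zero, zero_mul]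
    map_add' := by
      intro x y
      show i'⁻¹ * (x + y) * i' = i'⁻¹ * x * i' + i'⁻¹ * y * i'
      rw [mul_add, add_mul]
    commutes' := by
      intro r
      show i'⁻¹ * algebraMap ℝ ℍ[ℝ] r * i' = algebraMap ℝ ℍ[ℝ] r
      rw [← Algebra.commutes r i'⁻¹, mul_assoc, hinv1, mul_one] }
  -- σ as an algebra morphism
  let σₐ : ℍ[ℝ] →ₐ[ℝ] ℍ[ℝ] :=
  { toFun := σ
    map_one' := map_one σ
    map_mul' := map_mul σ
    map_zero' := map_zero σ
    map_add' := map_add σ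
    commutes' := my_sigma_real σ }
  let φ : ℍ[ℝ] →ₐ[ℝ] ℍ[ℝ] := B.liftHom
  have hφi : φ (QuaternionAlgebra.Basis.self ℝ).i = j' := by
    show B.lift _ = j'
    simp [QuaternionAlgebra.Basis.lift, QuaternionAlgebra.Basis.self, hBi]
  have hφj : φ (QuaternionAlgebra.Basis.self ℝ).j = k' := by
    show B.lift _ = k'
    simp [QuaternionAlgebra.Basis.lift, QuaternionAlgebra.Basis.self, hBj]
  -- σₐ ∘ φ = ψ ∘ φ
  have hcomp : σₐ.comp φ = ψ.comp φ := by
    apply QuaternionAlgebra.hom_ext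
    · show σₐ (φ _) = ψ (φ _)
      rw [hφi]
      show σ j' = i'⁻¹ * j' * i'
      rw [hsj, hiinv, neg_mul, neg_mul, hij, hki]
    · show σₐ (φ _) = ψ (φ _)
      rw [hφj]
      show σ k' = i'⁻¹ * k' * i'
      rw [hsk, hiinv, neg_mul, neg_mul, hik, neg_mul, hji, neg_neg]
  -- φ is surjective
  have hφinj : Function.Injective φ := by
    have : Function.Injective (φ : ℍ[ℝ] →+* ℍ[ℝ]) := RingHom.injective _
    exact this
  have hφsurj : Function.Surjective φ := by
    have h1 : Function.Injective φ.toLinearMap := hφinj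
    have := (LinearMap.injective_iff_surjective (f := φ.toLinearMap)).mp h1
    exact this
  have hconj : ∀ h : ℍ[ℝ], σ h = i'⁻¹ * h * i' := by
    intro h
    obtain ⟨x, rfl⟩ := hφsurj h
    have := DFunLike.congr_fun hcomp x
    exact this
  refine ⟨i', j', k', ?_, ?_, ?_, hij, hjk, hki, hconj, ?_⟩
  · rw [sq]; exact hi2
  · rw [sq]; exact hj2
  · rw [sq]; exact hk2
  · intro a b c d
    rw [map_add, map_add, map_add, my_sigma_real, my_smul, my_smul, my_smul,
      hsi, hsj, hsk, smul_neg, smul_neg]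
    abel
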